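/- Let L ≥ 1 and fix p with 0 ≤ p ≤ 1. Define φ(p,t) = (p·e^t + 1 − p)·exp( −(L/2)·p·(t² + 2t) ). Then the maximum of t ↦ φ(p,t) over the interval [0, 1/L] is attained at an endpoint, i.e. max_{0 ≤ t ≤ 1/L} φ(p,t) = max( φ(p,0), φ(p,1/L) ). -/

import Mathlib

/-- The derivative of φ(p,·). -/
lemma phi_hasDerivAt (L p t : ℝ) :
    HasDerivAt (fun s => (p * Real.exp s + 1 - p) * Real.exp (-(L / 2) * p * (s ^ 2 + 2 * s)))
      (Real.exp (-(L / 2) * p * (t ^ 2 + 2 * t)) *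
        (p * Real.exp t - L * p * (t + 1) * (p * Real.exp t + 1 - p))) t := by
  have h1 : HasDerivAt (fun s : ℝ => p * Real.exp s + 1 - p) (p * Real.exp t) t := by
    simpa using (((Real.hasDerivAt_exp t).const_mul p).add_const 1).sub_const p
  have h2 : HasDerivAt (fun s : ℝ => -(L / 2) * p * (s ^ 2 + 2 * s))
      (-(L / 2) * p * (2 * t + 2)) t := by
    have : HasDerivAt (fun s : ℝ => s ^ 2 + 2 * s) (2 * t + 2) t := by
      simpa using (hasDerivAt_pow 2 t).fun_add ((hasDerivAt_id t).const_mul 2)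
    simpa using this.const_mul (-(L / 2) * p)
  have := h1.mul h2.exp
  convert this using 1
  exacts [rfl, rfl, rfl, by ring]

/-- Concavity of the auxiliary function F. -/
lemma F_concave (L p : ℝ) (hL0 : 0 ≤ L) (hp1 : p ≤ 1) :
    ConcaveOn ℝ (Set.Icc (0 : ℝ) 1)
      (fun s => L * (s + 1) * (p + (1 - p) * Real.exp (-s)) - 1) := by
  have hD : Convex ℝ (Set.Icc (0 : ℝ) 1) := convex_Icc 0 1
  refine concaveOn_of_hasDerivWithinAt2_nonpos hD
    (f' := fun s => L * (p - (1 - p) * s * Real.exp (-s)))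
    (f'' := fun s => -(L * (1 - p) * (1 - s) * Real.exp (-s))) ?_ ?_ ?_ ?_
  · apply Continuous.continuousOn
    fun_prop
  · intro x hx
    have hF' : HasDerivAt (fun s => L * (s + 1) * (p + (1 - p) * Real.exp (-s)))
        (L * (p - (1 - p) * x * Real.exp (-x))) x := by
      have hexp : HasDerivAt (fun s : ℝ => Real.exp (-s)) (-Real.exp (-x)) x := by
        simpa using (hasDerivAt_id x).neg.exp
      have h1 : HasDerivAt (fun s : ℝ => L * (s + 1)) L x := by
        simpa using ((hasDerivAt_id x).add_const 1).const_mul L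
      have h2 : HasDerivAt (fun s : ℝ => p + (1 - p) * Real.exp (-s))
          ((1 - p) * -Real.exp (-x)) x := by
        simpa using (hexp.const_mul (1 - p)).const_add p
      have := h1.mul h2
      convert this using 1
      exacts [rfl, rfl, rfl, by ring]
    exact ((hF'.sub_const 1).hasDerivWithinAt)
  · intro x hx
    have hexp : HasDerivAt (fun s : ℝ => Real.exp (-s)) (-Real.exp (-x)) x := by
      simpa using (hasDerivAt_id x).neg.exp
    have h1 : HasDerivAt (fun s : ℝ => (1 - p) * s * Real.exp (-s))
        ((1 - p) * Real.exp (-x) + (1 - p) * x * -Real.exp (-x)) x := by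
      have := (((hasDerivAt_id x).const_mul (1 - p)).mul hexp)
      convert this using 1
      exacts [rfl, rfl, rfl, by simp only [id_eq]; ring]
    have : HasDerivAt (fun s : ℝ => L * (p - (1 - p) * s * Real.exp (-s)))
        (-(L * (1 - p) * (1 - x) * Real.exp (-x))) x := by
      have := (h1.const_sub p).const_mul L
      convert this using 1
      exacts [rfl, rfl, by ring]
    exact this.hasDerivWithinAt
  · intro x hx
    rw [interior_Icc] at hx
    have h1 : (0 : ℝ) ≤ 1 - p := by linarith
    have h2 : (0 : ℝ) ≤ 1 - x := by linarith [hx.2]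
    have h3 : (0 : ℝ) ≤ Real.exp (-x) := (Real.exp_pos _).le
    nlinarith [mul_nonneg (mul_nonneg (mul_nonneg hL0 h1) h2) h3]

/-- The derivative written via F: φ' = −E·p·eᵗ·F. -/
lemma deriv_eq_F (L p t : ℝ) :
    p * Real.exp t - L * p * (t + 1) * (p * Real.exp t + 1 - p) =
      -(p * Real.exp t * (L * (t + 1) * (p + (1 - p) * Real.exp (-t)) - 1)) := by
  rw [Real.exp_neg]
  have h : Real.exp t ≠ 0 := (Real.exp_pos t).ne'
  field_simp
  ring

theorem phi_max_at_endpoint (L : ℝ) (hL : 1 ≤ L) (p : ℝ) (hp0 : 0 ≤ p) (hp1 : p ≤ 1) :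
    ∀ t ∈ Set.Icc (0 : ℝ) (1 / L),
      (p * Real.exp t + 1 - p) * Real.exp (-(L / 2) * p * (t ^ 2 + 2 * t)) ≤
        max ((p * Real.exp 0 + 1 - p) * Real.exp (-(L / 2) * p * ((0 : ℝ) ^ 2 + 2 * 0)))
          ((p * Real.exp (1 / L) + 1 - p) *
            Real.exp (-(L / 2) * p * ((1 / L) ^ 2 + 2 * (1 / L)))) := by
  intro t ht
  obtain ⟨ht0, htL⟩ := ht
  have hL0 : (0 : ℝ) < L := lt_of_lt_of_le one_pos hL
  have hinvL : (1 : ℝ) / L ≤ 1 := by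
    rw [div_le_one hL0]; exact hL
  have ht1 : t ≤ 1 := htL.trans hinvL
  set f : ℝ → ℝ :=
    fun s => (p * Real.exp s + 1 - p) * Real.exp (-(L / 2) * p * (s ^ 2 + 2 * s)) with hf
  set F : ℝ → ℝ := fun s => L * (s + 1) * (p + (1 - p) * Real.exp (-s)) - 1 with hFdef
  have hconc : ConcaveOn ℝ (Set.Icc (0 : ℝ) 1) F := by
    rw [hFdef]; exact F_concave L p hL0.le hp1
  have hF0 : 0 ≤ F 0 := by
    simp only [hFdef, neg_zero, Real.exp_zero]
    nlinarith
  have hfc : Continuous f := by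
    apply Continuous.mul
    · fun_prop
    · fun_prop
  have hderiv : ∀ x, HasDerivAt f
      (-(Real.exp (-(L / 2) * p * (x ^ 2 + 2 * x)) * (p * Real.exp x * F x))) x := by
    intro x
    have h := phi_hasDerivAt L p x
    rw [deriv_eq_F] at h
    rw [hf]
    have heq : -(Real.exp (-(L / 2) * p * (x ^ 2 + 2 * x)) * (p * Real.exp x * F x)) =
        Real.exp (-(L / 2) * p * (x ^ 2 + 2 * x)) *
          -(p * Real.exp x * (L * (x + 1) * (p + (1 - p) * Real.exp (-x)) - 1)) := by
      simp only [hFdef]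
      ring
    rw [heq]
    exact h
  have hdiff : ∀ x, DifferentiableAt ℝ f x := fun x => (hderiv x).differentiableAt
  clear_value f F
  by_cases hFt : 0 ≤ F t
  · -- F ≥ 0 on [0,t], φ antitone there, so φ t ≤ φ 0
    have hFs : ∀ s ∈ Set.Icc (0 : ℝ) t, 0 ≤ F s := by
      intro s hs
      rcases eq_or_lt_of_le ht0 with h | hpos
      · have : s = 0 := le_antisymm (hs.2.trans h.symm.le) hs.1
        rw [this]; exact hF0
      · have h0m : (0 : ℝ) ∈ Set.Icc (0 : ℝ) 1 := by constructor <;> norm_num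
        have htm : t ∈ Set.Icc (0 : ℝ) 1 := ⟨ht0, ht1⟩
        have ha : 0 ≤ (t - s) / t := div_nonneg (by linarith [hs.2]) hpos.le
        have hb : 0 ≤ s / t := div_nonneg hs.1 hpos.le
        have hab : (t - s) / t + s / t = 1 := by field_simp; ring
        have hle := hconc.2 h0m htm ha hb hab
        have hcomb : ((t - s) / t) • (0 : ℝ) + ((s / t)) • t = s := by
          simp only [smul_eq_mul]
          field_simp
          ring
        rw [hcomb] at hle
        simp only [smul_eq_mul] at hle
        nlinarith [mul_nonneg ha hF0, mul_nonneg hb hFt]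
    have hanti : AntitoneOn f (Set.Icc 0 t) := by
      apply antitoneOn_of_deriv_nonpos (convex_Icc 0 t) hfc.continuousOn
      · exact fun x _ => (hdiff x).differentiableWithinAt
      · intro x hx
        rw [interior_Icc] at hx
        rw [(hderiv x).deriv]
        have hFx : 0 ≤ F x := hFs x ⟨hx.1.le, hx.2.le⟩
        have hE : 0 ≤ Real.exp (-(L / 2) * p * (x ^ 2 + 2 * x)) := (Real.exp_pos _).le
        have hpe : 0 ≤ p * Real.exp x := mul_nonneg hp0 (Real.exp_pos _).le
        nlinarith [mul_nonneg hE (mul_nonneg hpe hFx)]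
    have h1 : f t ≤ f 0 :=
      hanti (Set.left_mem_Icc.mpr ht0) (Set.right_mem_Icc.mpr ht0) ht0
    rw [hf] at h1
    exact le_trans h1 (le_max_left _ _)
  · -- F t < 0, then F ≤ 0 on [t, 1/L], φ monotone there, so φ t ≤ φ (1/L)
    push_neg at hFt
    have htpos : 0 < t := by
      rcases eq_or_lt_of_le ht0 with h | h
      · exfalso; rw [← h] at hFt; linarith
      · exact h
    have hFs : ∀ s ∈ Set.Icc t (1 / L), F s ≤ 0 := by
      intro s hs
      rcases eq_or_lt_of_le hs.1 with h | hlt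
      · rw [← h]; exact hFt.le
      · have h0m : (0 : ℝ) ∈ Set.Icc (0 : ℝ) 1 := by constructor <;> norm_num
        have hsm : s ∈ Set.Icc (0 : ℝ) 1 := ⟨(htpos.le.trans hs.1), hs.2.trans hinvL⟩
        have hspos : 0 < s := htpos.trans hlt
        have ha : 0 ≤ (s - t) / s := div_nonneg (by linarith) hspos.le
        have hb : 0 < t / s := div_pos htpos hspos
        have hab : (s - t) / s + t / s = 1 := by field_simp; ring
        have hle := hconc.2 h0m hsm ha hb.le hab
        have hcomb : ((s - t) / s) • (0 : ℝ) + ((t / s)) • s = t := by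
          simp only [smul_eq_mul]
          field_simp
          ring
        rw [hcomb] at hle
        simp only [smul_eq_mul] at hle
        nlinarith [mul_nonneg ha hF0]
    have hmono : MonotoneOn f (Set.Icc t (1 / L)) := by
      apply monotoneOn_of_deriv_nonneg (convex_Icc t (1 / L)) hfc.continuousOn
      · exact fun x _ => (hdiff x).differentiableWithinAt
      · intro x hx
        rw [interior_Icc] at hx
        rw [(hderiv x).deriv]
        have hFx : F x ≤ 0 := hFs x ⟨hx.1.le, hx.2.le⟩
        have hE : 0 ≤ Real.exp (-(L / 2) * p * (x ^ 2 + 2 * x)) := (Real.exp_pos _).le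
        have hpe : 0 ≤ p * Real.exp x := mul_nonneg hp0 (Real.exp_pos _).le
        nlinarith [mul_nonneg hE (mul_nonneg hpe (neg_nonneg.mpr hFx))]
    have h1 : f t ≤ f (1 / L) :=
      hmono (Set.left_mem_Icc.mpr htL) (Set.right_mem_Icc.mpr htL) htL
    rw [hf] at h1
    exact le_trans h1 (le_max_right _ _)
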